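/- The planar set S = S₁ ∪ S₂ ⊆ ℝ², where S₁ = {(a,b) | (b+1−a²)² ≤ 4b} and S₂ = {(a,b) | (b+1−a²)² ≥ 4b, b ≥ 0, a² ≤ b+1}, is convex. -/
import Mathlib

lemma S_mem_iff (a b : ℝ) :
    ((b + 1 - a ^ 2) ^ 2 ≤ 4 * b ∨
      (4 * b ≤ (b + 1 - a ^ 2) ^ 2 ∧ 0 ≤ b ∧ a ^ 2 ≤ b + 1)) ↔
    (0 ≤ b ∧ |a| ≤ Real.sqrt b + 1) := by
  have hb2 : 0 ≤ b → Real.sqrt b ^ 2 = b := fun h => Real.sq_sqrt h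
  constructor
  · rintro (h | ⟨h1, hb, ha⟩)
    · have hb : 0 ≤ b := by nlinarith [sq_nonneg (b + 1 - a ^ 2)]
      have hs := Real.sq_sqrt hb
      have hsn := Real.sqrt_nonneg b
      refine ⟨hb, ?_⟩
      have h2 : a ^ 2 ≤ (Real.sqrt b + 1) ^ 2 := by nlinarith
      calc |a| = Real.sqrt (a ^ 2) := (Real.sqrt_sq_eq_abs a).symm
        _ ≤ Real.sqrt ((Real.sqrt b + 1) ^ 2) := Real.sqrt_le_sqrt h2
        _ = Real.sqrt b + 1 := Real.sqrt_sq (by linarith)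
    · have hs := Real.sq_sqrt hb
      have hsn := Real.sqrt_nonneg b
      refine ⟨hb, ?_⟩
      have h2 : a ^ 2 ≤ (Real.sqrt b + 1) ^ 2 := by nlinarith
      calc |a| = Real.sqrt (a ^ 2) := (Real.sqrt_sq_eq_abs a).symm
        _ ≤ Real.sqrt ((Real.sqrt b + 1) ^ 2) := Real.sqrt_le_sqrt h2
        _ = Real.sqrt b + 1 := Real.sqrt_sq (by linarith)
  · rintro ⟨hb, ha⟩
    have hs := Real.sq_sqrt hb
    have hsn := Real.sqrt_nonneg b
    have ha2 : a ^ 2 ≤ (Real.sqrt b + 1) ^ 2 := by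
      have := abs_nonneg a
      have : a ^ 2 = |a| ^ 2 := (sq_abs a).symm
      nlinarith [abs_nonneg a, sq_abs a]
    by_cases h : (b + 1 - a ^ 2) ^ 2 ≤ 4 * b
    · exact Or.inl h
    · push_neg at h
      refine Or.inr ⟨le_of_lt h, hb, ?_⟩
      by_contra hc
      push_neg at hc
      nlinarith

lemma sqrt_concave {x y t s : ℝ} (hx : 0 ≤ x) (hy : 0 ≤ y) (ht : 0 ≤ t)
    (hs : 0 ≤ s) (hts : t + s = 1) :
    t * Real.sqrt x + s * Real.sqrt y ≤ Real.sqrt (t * x + s * y) := by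
  have hu := Real.sq_sqrt hx
  have hv := Real.sq_sqrt hy
  have hun := Real.sqrt_nonneg x
  have hvn := Real.sqrt_nonneg y
  have hw : 0 ≤ t * x + s * y := by positivity
  have hww := Real.sq_sqrt hw
  have hwn := Real.sqrt_nonneg (t * x + s * y)
  obtain rfl : s = 1 - t := by linarith
  have h1t : (0:ℝ) ≤ 1 - t := hs
  apply Real.le_sqrt_of_sq_le
  have hid : t * x + (1 - t) * y - (t * Real.sqrt x + (1 - t) * Real.sqrt y) ^ 2
      = t * (1 - t) * (Real.sqrt x - Real.sqrt y) ^ 2 := by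
    linear_combination (-t) * hu - (1 - t) * hv
  nlinarith [mul_nonneg (mul_nonneg ht h1t) (sq_nonneg (Real.sqrt x - Real.sqrt y))]

theorem S1_union_S2_convex :
    Convex ℝ ({p : ℝ × ℝ | (p.2 + 1 - p.1 ^ 2) ^ 2 ≤ 4 * p.2} ∪
      {p : ℝ × ℝ | 4 * p.2 ≤ (p.2 + 1 - p.1 ^ 2) ^ 2 ∧ 0 ≤ p.2 ∧ p.1 ^ 2 ≤ p.2 + 1}) := by
  have hset : ({p : ℝ × ℝ | (p.2 + 1 - p.1 ^ 2) ^ 2 ≤ 4 * p.2} ∪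
      {p : ℝ × ℝ | 4 * p.2 ≤ (p.2 + 1 - p.1 ^ 2) ^ 2 ∧ 0 ≤ p.2 ∧ p.1 ^ 2 ≤ p.2 + 1}) =
      {p : ℝ × ℝ | 0 ≤ p.2 ∧ |p.1| ≤ Real.sqrt p.2 + 1} := by
    ext p
    simpa using S_mem_iff p.1 p.2
  rw [hset]
  rintro ⟨a1, b1⟩ ⟨h1, h1'⟩ ⟨a2, b2⟩ ⟨h2, h2'⟩ t s ht hs hts
  constructor
  · show (0:ℝ) ≤ t * b1 + s * b2
    positivity
  · show |t * a1 + s * a2| ≤ Real.sqrt (t * b1 + s * b2) + 1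
    have key := sqrt_concave h1 h2 ht hs hts
    calc |t * a1 + s * a2| ≤ t * |a1| + s * |a2| := by
          calc |t * a1 + s * a2| ≤ |t * a1| + |s * a2| := abs_add_le _ _
            _ = t * |a1| + s * |a2| := by
              rw [abs_mul, abs_mul, abs_of_nonneg ht, abs_of_nonneg hs]
      _ ≤ t * (Real.sqrt b1 + 1) + s * (Real.sqrt b2 + 1) := by
          gcongr
      _ = t * Real.sqrt b1 + s * Real.sqrt b2 + (t + s) := by ring
      _ = t * Real.sqrt b1 + s * Real.sqrt b2 + 1 := by rw [hts]
      _ ≤ Real.sqrt (t * b1 + s * b2) + 1 := by linarith
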